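/- Fix a sequence of classes F_{1:Λ} and a point (x,y) ∈ X × [0,1]. If for some λ ∈ [Λ], |SOA_{α_λ}(F_λ)(x) − y| > 5α_λ, then Terr(F_{1:Λ},x,y) > α_λ. -/
import Mathlib


open Classical in
/-- The cutoff point of the hierarchical aggregation rule: the smallest `l` with
`1 ≤ l < Λ` and `|g l - g (l+1)| > 2·2^{-l}`, or `Λ` if no such `l` exists. -/
noncomputable def cutoff (Λ : ℕ) (g : ℕ → ℝ) : ℕ :=
  if h : ∃ l, (1 ≤ l ∧ l < Λ) ∧ 2 * ((2:ℝ) ^ l)⁻¹ < |g l - g (l + 1)| then Nat.find h else Λ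

open Classical in
lemma cutoff_le (Λ : ℕ) (g : ℕ → ℝ) : cutoff Λ g ≤ Λ := by
  unfold cutoff
  split_ifs with h
  · exact le_of_lt (Nat.find_spec h).1.2
  · exact le_rfl

open Classical in
lemma step_bound (Λ : ℕ) (g : ℕ → ℝ) (l : ℕ) (h1 : 1 ≤ l) (h2 : l < cutoff Λ g) :
    |g l - g (l + 1)| ≤ 2 * ((2:ℝ) ^ l)⁻¹ := by
  by_contra hcon
  push_neg at hcon
  have hlΛ : l < Λ := lt_of_lt_of_le h2 (cutoff_le Λ g)
  have hex : ∃ l', (1 ≤ l' ∧ l' < Λ) ∧ 2 * ((2:ℝ) ^ l')⁻¹ < |g l' - g (l' + 1)| :=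
    ⟨l, ⟨h1, hlΛ⟩, hcon⟩
  have hle : cutoff Λ g ≤ l := by
    unfold cutoff
    rw [dif_pos hex]
    exact Nat.find_le ⟨⟨h1, hlΛ⟩, hcon⟩
  omega

/-- abstract form of Lemma terr-lb: for `g_1,…,g_Λ ∈ [0,1]` with cutoff
point `λ̄` and `y ∈ [0,1]`, if `|g_λ − y| > 5·2^{-λ}` for some `λ ∈ [Λ]`, then the
truncated error `max(|g_{λ̄} − y|, 2^{-λ̄})` exceeds `2^{-λ}`. -/
theorem stmt13 (Λ : ℕ) (hΛ : 1 ≤ Λ) (g : ℕ → ℝ)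
    (hg : ∀ l, 1 ≤ l → l ≤ Λ → g l ∈ Set.Icc (0:ℝ) 1)
    (y : ℝ) (hy : y ∈ Set.Icc (0:ℝ) 1)
    (l : ℕ) (hl1 : 1 ≤ l) (hlΛ : l ≤ Λ)
    (hfar : 5 * ((2:ℝ) ^ l)⁻¹ < |g l - y|) :
    ((2:ℝ) ^ l)⁻¹ < max |g (cutoff Λ g) - y| ((2:ℝ) ^ cutoff Λ g)⁻¹ := by
  set c := cutoff Λ g with hc
  have hpl : (0:ℝ) < ((2:ℝ) ^ l)⁻¹ := by positivity
  rcases lt_trichotomy c l with h | h | h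
  · -- c < l: second component
    apply lt_max_of_lt_right
    apply inv_strictAnti₀ (by positivity)
    exact pow_lt_pow_right₀ one_lt_two h
  · -- c = l
    apply lt_max_of_lt_left
    rw [h]
    linarith
  · -- c > l: chain bound
    have key : ∀ m, l ≤ m → m ≤ c → |g l - g m| ≤ 4 * (((2:ℝ) ^ l)⁻¹ - ((2:ℝ) ^ m)⁻¹) := by
      intro m
      induction m with
      | zero => intro ha _; omega
      | succ n ih =>
        intro hln hnc
        rcases eq_or_lt_of_le hln with he | hlt
        · rw [← he]; simp
        · have hln' : l ≤ n := by omega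
          have h1 := ih hln' (by omega)
          have h2 : |g n - g (n + 1)| ≤ 2 * ((2:ℝ) ^ n)⁻¹ :=
            step_bound Λ g n (by omega) (by omega)
          have h3 : |g l - g (n + 1)| ≤ |g l - g n| + |g n - g (n + 1)| :=
            abs_sub_le _ _ _
          have hpn : ((2:ℝ) ^ (n + 1))⁻¹ = ((2:ℝ) ^ n)⁻¹ / 2 := by
            rw [pow_succ]; field_simp
          rw [hpn]
          linarith
    have h4 := key c (le_of_lt h) le_rfl
    have h5 : |g l - y| ≤ |g l - g c| + |g c - y| := abs_sub_le _ _ _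
    have hpc : (0:ℝ) < ((2:ℝ) ^ c)⁻¹ := by positivity
    apply lt_max_of_lt_left
    linarith
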